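/- Let w be a binary word and α > 2. If μ^s(w) contains a factor with period p and exponent (length/period) κ ≥ α, then p is divisible by 2^s and w contains a factor with period p/2^s and exponent at least κ (in particular a κ-power up to rounding of lengths). -/

import Mathlib

/-- Thue–Morse morphism: 0 ↦ 01, 1 ↦ 10 (false = 0, true = 1). -/
def mu : List Bool → List Bool :=
  fun w => w.flatMap (fun b => if b then [true, false] else [false, true])

/-- `w` has period `p`: `w[i] = w[i+p]` whenever both defined. -/
def HasPeriod (w : List Bool) (p : ℕ) : Prop :=
  ∀ i, i + p < w.length → w[i]? = w[i + p]?

/-- `w` is α-power-free: no factor `u` has a period `p` with `|u|/p ≥ α`. -/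
def PowerFree (α : ℝ) (w : List Bool) : Prop :=
  ∀ u p, u <:+: w → 0 < p → HasPeriod u p → (u.length : ℝ) / p < α

/-- `𝓛`: factors of images of `mu`. -/
def InL (w : List Bool) : Prop := ∃ x, w <:+: mu x

lemma mu_length (w : List Bool) : (mu w).length = 2 * w.length := by
  induction w with
  | nil => rfl
  | cons b w ih => cases b <;> simp [mu, List.flatMap_cons] at * <;> omega

lemma mu_get_even (w : List Bool) (k : ℕ) : (mu w)[2 * k]? = w[k]? := by
  induction w generalizing k with
  | nil => rfl
  | cons b w ih =>
    cases k with
    | zero => cases b <;> rfl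
    | succ k =>
      have h : mu (b :: w) = (if b then [true,false] else [false,true]) ++ mu w := rfl
      rw [h, List.getElem?_append_right (by cases b <;> simp <;> omega)]
      have h2 : 2 * (k+1) - (if b then ([true,false]:List Bool) else [false,true]).length
          = 2 * k := by cases b <;> simp <;> omega
      rw [h2, ih]
      rfl

lemma mu_get_odd (w : List Bool) (k : ℕ) :
    (mu w)[2 * k + 1]? = (w[k]?).map (fun b => !b) := by
  induction w generalizing k with
  | nil => rfl
  | cons b w ih =>
    cases k with
    | zero => cases b <;> rfl
    | succ k =>
      have h : mu (b :: w) = (if b then [true,false] else [false,true]) ++ mu w := rfl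
      rw [h, List.getElem?_append_right (by cases b <;> simp <;> omega)]
      have h2 : 2 * (k+1) + 1 - (if b then ([true,false]:List Bool) else [false,true]).length
          = 2 * k + 1 := by cases b <;> simp <;> omega
      rw [h2, ih]
      rfl

lemma get?_some (l : List Bool) (k : ℕ) (h : k < l.length) :
    l[k]? = some (l.getD k false) := by
  rw [List.getD_eq_getElem?_getD, List.getElem?_eq_getElem h]; rfl

lemma not_inj : Function.Injective (fun b : Bool => !b) := by
  intro a b h; cases a <;> cases b <;> simp_all

/-- One de-substitution step. -/
lemma mu_step (w u : List Bool) (p : ℕ) (hp : 0 < p) (hu : u <:+: mu w)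
    (hper : HasPeriod u p) (hlen : 2 * p < u.length) :
    2 ∣ p ∧ ∃ v : List Bool, v <:+: w ∧ HasPeriod v (p / 2) ∧ u.length ≤ 2 * v.length := by
  obtain ⟨x, y, hxy⟩ := hu
  set j := x.length with hj
  set n := u.length with hn
  have htlen : (mu w).length = j + n + y.length := by
    rw [← hxy]; simp [hj, hn]; omega
  have hnw : j + n ≤ 2 * w.length := by
    have := mu_length w; omega
  have hget : ∀ i, i < n → (mu w)[j + i]? = u[i]? := by
    intro i hi
    rw [← hxy, List.append_assoc, List.getElem?_append_right (by omega), hj]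
    rw [Nat.add_sub_cancel_left]
    exact List.getElem?_append_left hi
  have E : ∀ m, j ≤ m → m + p < j + n → (mu w)[m]? = (mu w)[m + p]? := by
    intro m h1 h2
    have e1 := hget (m - j) (by omega)
    have e2 := hget (m - j + p) (by omega)
    have e3 := hper (m - j) (by omega)
    have hm : j + (m - j) = m := by omega
    have hm2 : j + (m - j + p) = m + p := by omega
    rw [hm] at e1; rw [hm2] at e2
    rw [e1, e2, e3]
  rcases Nat.even_or_odd p with heven | hodd
  · -- p even : construct v
    obtain ⟨r, hr⟩ := heven
    have hr' : p = 2 * r := by omega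
    have hrpos : 0 < r := by omega
    -- consequences on w
    have Heven : ∀ k, j ≤ 2 * k → 2 * k + p < j + n → w[k]? = w[k + r]? := by
      intro k h1 h2
      have := E (2 * k) h1 h2
      rw [show 2 * k + p = 2 * (k + r) by omega, mu_get_even, mu_get_even] at this
      exact this
    have Hodd : ∀ k, j ≤ 2 * k + 1 → 2 * k + 1 + p < j + n → w[k]? = w[k + r]? := by
      intro k h1 h2
      have := E (2 * k + 1) h1 h2
      rw [show 2 * k + 1 + p = 2 * (k + r) + 1 by omega, mu_get_odd, mu_get_odd] at this
      exact Option.map_injective not_inj this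
    set a := j / 2 with haj
    set e := (j + n - 1) / 2 with hae
    set L := e + 1 - a with hL
    have hew : e < w.length := by omega
    have haL : a + L ≤ w.length := by omega
    refine ⟨⟨r, hr'⟩, (w.drop a).take L, ⟨w.take a, (w.drop a).drop L, by simp⟩, ?_, ?_⟩
    · -- period
      have hvlen : ((w.drop a).take L).length = L := by
        simp; omega
      intro i hi
      rw [hvlen] at hi
      have hp2 : p / 2 = r := by omega
      rw [hp2] at hi ⊢
      rw [List.getElem?_take_of_lt (by omega), List.getElem?_take_of_lt hi, List.getElem?_drop, List.getElem?_drop]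
      rw [show a + (i + r) = a + i + r by omega]
      by_cases h1 : j ≤ 2 * (a + i)
      · exact Heven (a + i) h1 (by omega)
      · exact Hodd (a + i) (by omega) (by omega)
    · -- length
      have hvlen : ((w.drop a).take L).length = L := by simp; omega
      rw [hvlen]; omega
  · -- p odd : contradiction
    exfalso
    obtain ⟨q, hq⟩ := hodd
    have Hext1 : ∀ k, j ≤ 2 * k → 2 * k + p < j + n →
        w.getD k false = !(w.getD (k + q) false) := by
      intro k h1 h2
      have hE := E (2 * k) h1 h2
      rw [show 2 * k + p = 2 * (k + q) + 1 by omega, mu_get_even, mu_get_odd] at hE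
      rw [get?_some w k (by omega), get?_some w (k + q) (by omega), Option.map_some] at hE
      exact Option.some.inj hE
    have Hext2 : ∀ k, j ≤ 2 * k + 1 → 2 * k + 1 + p < j + n →
        w.getD (k + q + 1) false = !(w.getD k false) := by
      intro k h1 h2
      have hE := E (2 * k + 1) h1 h2
      rw [show 2 * k + 1 + p = 2 * (k + q + 1) by omega, mu_get_odd, mu_get_even] at hE
      rw [get?_some w k (by omega), get?_some w (k + q + 1) (by omega), Option.map_some] at hE
      exact (Option.some.inj hE).symm
    have C : ∀ k, j ≤ 2 * k → 2 * k + 1 + p < j + n →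
        w.getD (k + q) false = w.getD (k + q + 1) false := by
      intro k h1 h2
      have c1 := Hext1 k h1 (by omega)
      have c2 := Hext2 k (by omega) h2
      rw [c2, c1]; simp
    set a := (j + 1) / 2 with haj
    have chain : ∀ i, i ≤ q → w.getD (a + q) false = w.getD (a + q + i) false := by
      intro i hi
      induction i with
      | zero => rfl
      | succ i ih =>
        have hc := C (a + i) (by omega) (by omega)
        have hc' : w.getD (a + q + i) false = w.getD (a + q + (i + 1)) false := by
          rw [show a + q + i = a + i + q by omega, show a + q + (i + 1) = a + i + q + 1 by omega]
          exact hc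
        rw [ih (by omega)]
        exact hc'
    have h1 := Hext1 (a + q) (by omega) (by omega)
    have h2 := chain q le_rfl
    rw [show a + q + q = a + 2 * q by omega] at h2
    rw [show a + q + q = a + 2 * q by omega] at h1
    rw [h2] at h1
    exact absurd h1 (by cases w.getD (a + 2 * q) false <;> simp)

theorem mu_iter_desubstitution (α : ℝ) (hα : 2 < α) (w : List Bool) (s : ℕ)
    (u : List Bool) (p : ℕ) (hp : 0 < p) (hu : u <:+: mu^[s] w)
    (hper : HasPeriod u p) (hexp : α ≤ (u.length : ℝ) / p) :
    2 ^ s ∣ p ∧ ∃ v : List Bool, v <:+: w ∧ HasPeriod v (p / 2 ^ s) ∧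
      (u.length : ℝ) / p ≤ (v.length : ℝ) / (p / 2 ^ s : ℕ) := by
  induction s generalizing u p with
  | zero =>
    simp only [Function.iterate_zero_apply] at hu
    exact ⟨one_dvd _, u, hu, by simpa using hper, by simp⟩
  | succ s ih =>
    rw [Function.iterate_succ_apply'] at hu
    have hppos : (0:ℝ) < p := by exact_mod_cast hp
    have hn : 2 * p < u.length := by
      have h2 : (2:ℝ) < (u.length : ℝ) / p := lt_of_lt_of_le hα hexp
      have := (lt_div_iff₀ hppos).mp h2
      exact_mod_cast this
    obtain ⟨h2, v, hvw, hvper, hvlen⟩ := mu_step _ _ _ hp hu hper hn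
    obtain ⟨r, hr⟩ := h2
    have hrpos : 0 < r := by omega
    have hp2 : p / 2 = r := by omega
    have key : (u.length : ℝ) / p ≤ (v.length : ℝ) / (p / 2 : ℕ) := by
      rw [hp2, hr]
      have hrR : (0:ℝ) < r := by exact_mod_cast hrpos
      have hdR : (0:ℝ) < ((2 * r : ℕ) : ℝ) := by exact_mod_cast (by omega : 0 < 2 * r)
      rw [div_le_div_iff₀ hdR hrR]
      have hvR : (u.length : ℝ) ≤ 2 * v.length := by exact_mod_cast hvlen
      push_cast
      nlinarith [hvR, hrR]
    have hvexp : α ≤ (v.length : ℝ) / (p / 2 : ℕ) := le_trans hexp key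
    obtain ⟨hdvd, v', hv'w, hv'per, hv'exp⟩ := ih v (p / 2) (by omega) hvw hvper hvexp
    have hdiv : p / 2 / 2 ^ s = p / 2 ^ (s + 1) := by
      rw [Nat.div_div_eq_div_mul, ← pow_succ']
    refine ⟨?_, v', hv'w, ?_, ?_⟩
    · rw [pow_succ']
      rw [hp2] at hdvd
      exact mul_dvd_mul_left 2 hdvd |>.trans (by rw [← hr])
    · rwa [hdiv] at hv'per
    · rw [← hdiv]
      exact le_trans key hv'exp
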